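/- With the Kleene-implication sequences t_n, f_n, u_n as above, f_n satisfies the recurrence f_n = Σ_{i=1}^{n-1} f_i · (2·3^{n-i-1}·C_{n-i} − f_{n-i}) for n ≥ 2, with f_1 = 1, where C_m = (1/m)·binomial(2m-2, m-1). -/

import Mathlib

/-- `C n = (1/n) * binom(2n-2, n-1)`, the number of bracketings of `n` terms. -/
noncomputable def catC (n : ℕ) : ℚ := (Nat.choose (2 * n - 2) (n - 1) : ℚ) / n

lemma catC_eq (n : ℕ) (h : 1 ≤ n) : catC n = (catalan (n - 1) : ℚ) := by
  obtain ⟨m, rfl⟩ := Nat.exists_eq_add_of_le h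
  have h1 : 2 * (1 + m) - 2 = 2 * m := by omega
  have h2 : 1 + m - 1 = m := by omega
  have h3 : (m + 1) * catalan m = (2 * m).choose m := by
    rw [succ_mul_catalan_eq_centralBinom]; rfl
  rw [catC, h1, h2, ← h3]
  push_cast
  rw [mul_comm]
  rw [mul_div_assoc, show (m:ℚ)+1 = 1+m by ring, div_self (by positivity), mul_one]

lemma sum_reflect (n : ℕ) (g : ℕ → ℚ) :
    ∑ i ∈ Finset.Icc 1 (n - 1), g i = ∑ i ∈ Finset.Icc 1 (n - 1), g (n - i) := by
  refine Finset.sum_nbij' (fun i => n - i) (fun i => n - i) ?_ ?_ ?_ ?_ ?_ <;>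
    simp only [Finset.mem_Icc] <;> intro a ha
  · omega
  · omega
  · omega
  · omega
  · congr 1; omega

lemma catC_conv (n : ℕ) (h : 2 ≤ n) :
    catC n = ∑ i ∈ Finset.Icc 1 (n - 1), catC i * catC (n - i) := by
  obtain ⟨m, rfl⟩ := Nat.exists_eq_add_of_le h
  rw [catC_eq _ (by omega)]
  have h1 : 2 + m - 1 = m + 1 := by omega
  rw [h1, catalan_succ]
  push_cast
  rw [Fin.sum_univ_eq_sum_range (fun i => (catalan i : ℚ) * (catalan (m - i) : ℚ))]
  rw [show Finset.Icc 1 (m + 1) = Finset.map ⟨fun j => j + 1, fun a b h => by simpa using h⟩ (Finset.range (m + 1)) from ?_]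
  · rw [Finset.sum_map]
    push_cast
    apply Finset.sum_congr rfl
    intro j hj
    simp only [Finset.mem_range] at hj
    show _ = catC (j + 1) * catC (2 + m - (j + 1))
    rw [catC_eq _ (by omega), catC_eq _ (by omega)]
    push_cast
    congr 3 <;> omega
  · ext x
    simp only [Finset.mem_Icc, Finset.mem_map, Finset.mem_range, Function.Embedding.coeFn_mk]
    show (1 ≤ x ∧ x ≤ m + 1) ↔ ∃ a < m + 1, a + 1 = x
    constructor
    · intro hx; exact ⟨x - 1, by omega, by omega⟩
    · rintro ⟨a, ha, rfl⟩; omega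

lemma catC_one : catC 1 = 1 := by
  rw [catC_eq 1 le_rfl]; simp

lemma u_formula (t f u : ℕ → ℚ)
    (ht1 : t 1 = 1) (hf1 : f 1 = 1) (hu1 : u 1 = 1)
    (hu : ∀ n : ℕ, 2 ≤ n → u n = ∑ i ∈ Finset.Icc 1 (n - 1),
      (t i * u (n - i) + u i * f (n - i) + u i * u (n - i)))
    (ht : ∀ n : ℕ, 2 ≤ n → t n = (3 : ℚ) ^ n * catC n - f n - u n) :
    ∀ n : ℕ, 1 ≤ n → u n = (3 : ℚ) ^ (n - 1) * catC n := by
  have ht' : ∀ i, 1 ≤ i → t i = (3 : ℚ) ^ i * catC i - f i - u i := by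
    intro i hi
    rcases eq_or_lt_of_le hi with h | h
    · rw [← h, ht1, hf1, hu1, catC_one]; norm_num
    · exact ht i h
  intro n
  induction n using Nat.strong_induction_on with
  | _ n IH =>
    intro hn
    rcases eq_or_lt_of_le hn with h | h
    · rw [← h, hu1, catC_one]; norm_num
    · have h2 : 2 ≤ n := h
      rw [hu n h2]
      have key : ∀ i ∈ Finset.Icc 1 (n - 1),
          t i * u (n - i) + u i * f (n - i) + u i * u (n - i)
          = (3 : ℚ) ^ (n - 1) * (catC i * catC (n - i))
            - f i * ((3 : ℚ) ^ (n - i - 1) * catC (n - i))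
            + ((3 : ℚ) ^ (i - 1) * catC i) * f (n - i) := by
        intro i hi
        simp only [Finset.mem_Icc] at hi
        rw [ht' i hi.1, IH i (by omega) hi.1, IH (n - i) (by omega) (by omega)]
        have hp : (3 : ℚ) ^ i * (3 : ℚ) ^ (n - i - 1) = (3 : ℚ) ^ (n - 1) := by
          rw [← pow_add]; congr 1; omega
        linear_combination catC i * catC (n - i) * hp
      rw [Finset.sum_congr rfl key, Finset.sum_add_distrib, Finset.sum_sub_distrib,
        ← Finset.mul_sum, ← catC_conv n h2]
      have hAB : ∑ i ∈ Finset.Icc 1 (n - 1), f i * ((3 : ℚ) ^ (n - i - 1) * catC (n - i))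
          = ∑ i ∈ Finset.Icc 1 (n - 1), ((3 : ℚ) ^ (i - 1) * catC i) * f (n - i) := by
        rw [sum_reflect n (fun i => f i * ((3 : ℚ) ^ (n - i - 1) * catC (n - i)))]
        apply Finset.sum_congr rfl
        intro i hi
        simp only [Finset.mem_Icc] at hi
        have e1 : n - (n - i) = i := by omega
        rw [e1]; ring
      rw [hAB]; ring

/-- the "false" row counts satisfy
`f n = Σ_{i=1}^{n-1} f i * (2 * 3^(n-i-1) * C (n-i) - f (n-i))` for `n ≥ 2`. -/
theorem f_recurrence (t f u : ℕ → ℚ)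
    (ht1 : t 1 = 1) (hf1 : f 1 = 1) (hu1 : u 1 = 1)
    (hf : ∀ n : ℕ, 2 ≤ n → f n = ∑ i ∈ Finset.Icc 1 (n - 1), t i * f (n - i))
    (hu : ∀ n : ℕ, 2 ≤ n → u n = ∑ i ∈ Finset.Icc 1 (n - 1),
      (t i * u (n - i) + u i * f (n - i) + u i * u (n - i)))
    (ht : ∀ n : ℕ, 2 ≤ n → t n = (3 : ℚ) ^ n * catC n - f n - u n) :
    ∀ n : ℕ, 2 ≤ n →
      f n = ∑ i ∈ Finset.Icc 1 (n - 1),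
        f i * (2 * (3 : ℚ) ^ (n - i - 1) * catC (n - i) - f (n - i)) := by
  have hU := u_formula t f u ht1 hf1 hu1 hu ht
  have ht' : ∀ i, 1 ≤ i → t i = (3 : ℚ) ^ i * catC i - f i - u i := by
    intro i hi
    rcases eq_or_lt_of_le hi with h | h
    · rw [← h, ht1, hf1, hu1, catC_one]; norm_num
    · exact ht i h
  intro n hn
  rw [hf n hn]
  rw [sum_reflect n (fun i => t i * f (n - i))]
  apply Finset.sum_congr rfl
  intro i hi
  simp only [Finset.mem_Icc] at hi
  have e1 : n - (n - i) = i := by omega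
  have hni : 1 ≤ n - i := by omega
  rw [e1, ht' (n - i) hni, hU (n - i) hni]
  have hp : (3 : ℚ) ^ (n - i) = 3 * (3 : ℚ) ^ (n - i - 1) := by
    rw [← pow_succ']; congr 1; omega
  rw [hp]; ring
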